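/- Let $\tau \in \mathcal{T}(s)$ with $1 \le \tau \le \sigma := \sigma(s,\lambda)$, where $\sigma(s,\lambda)$ is the optimal hitting time of the Gittins index above level $\lambda$. Then $\mathcal{E}(\sum_{t=\tau+1}^{\sigma} \beta^t (h(s+t) - \lambda) \mid \mathcal{F}_{s+\tau}) \le 0$ almost surely. -/

import Mathlib

open MeasureTheory Filter Classical Finset

variable {Ω : Type*} [MeasurableSpace Ω]

structure ConsistentCNE (μ : Measure Ω) (ℱ : ℕ → MeasurableSpace Ω)
    (E : ℕ → (Ω → ℝ) → (Ω → ℝ)) : Prop where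
  adapted : ∀ t X, Measurable[ℱ t] (E t X)
  mono : ∀ t (X Y : Ω → ℝ), Y ≤ᵐ[μ] X → E t Y ≤ᵐ[μ] E t X
  strictMono : ∀ t (X Y : Ω → ℝ), Y ≤ᵐ[μ] X → E t X =ᵐ[μ] E t Y → X =ᵐ[μ] Y
  transl : ∀ t (X c : Ω → ℝ), Measurable[ℱ t] c →
      E t (fun ω => X ω + c ω) =ᵐ[μ] fun ω => E t X ω + c ω
  normalized : ∀ t, E t (fun _ => 0) =ᵐ[μ] fun _ => 0
  subadd : ∀ t (X Y : Ω → ℝ),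
      E t (fun ω => X ω + Y ω) ≤ᵐ[μ] fun ω => E t X ω + E t Y ω
  posHom : ∀ t (X lam : Ω → ℝ), Measurable[ℱ t] lam → (∀ᵐ ω ∂μ, 0 ≤ lam ω) →
      E t (fun ω => lam ω * X ω) =ᵐ[μ] fun ω => lam ω * E t X ω
  lebesgue : ∀ t (Xn : ℕ → Ω → ℝ) (X : Ω → ℝ) (K : ℝ),
      (∀ n, ∀ᵐ ω ∂μ, |Xn n ω| ≤ K) →
      (∀ᵐ ω ∂μ, Tendsto (fun n => Xn n ω) atTop (nhds (X ω))) →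
      ∀ᵐ ω ∂μ, Tendsto (fun n => E t (Xn n) ω) atTop (nhds (E t X ω))
  tower : ∀ s t (X : Ω → ℝ), s ≤ t → E s X =ᵐ[μ] E s (E t X)

noncomputable def chi (D : Set Ω) : Ω → ℝ := fun ω => if ω ∈ D then 1 else 0

lemma chi_meas {m : MeasurableSpace Ω} {D : Set Ω} (hD : MeasurableSet[m] D) :
    Measurable[m] (chi D) := Measurable.ite hD measurable_const measurable_const

lemma chi_nonneg (D : Set Ω) (ω : Ω) : 0 ≤ chi D ω := by
  unfold chi; split_ifs <;> norm_num

lemma chi_mem {D : Set Ω} {ω : Ω} (h : ω ∈ D) : chi D ω = 1 := if_pos h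

lemma chi_not_mem {D : Set Ω} {ω : Ω} (h : ω ∉ D) : chi D ω = 0 := if_neg h

variable {μ : Measure Ω} {ℱ : ℕ → MeasurableSpace Ω} {E : ℕ → (Ω → ℝ) → (Ω → ℝ)}

lemma ConsistentCNE.congr (hE : ConsistentCNE μ ℱ E) {t : ℕ} {X Y : Ω → ℝ} (h : X =ᵐ[μ] Y) :
    E t X =ᵐ[μ] E t Y :=
  (hE.mono t Y X h.le).antisymm (hE.mono t X Y h.symm.le)

lemma ConsistentCNE.localize (hE : ConsistentCNE μ ℱ E) {t : ℕ} {D : Set Ω}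
    (hD : MeasurableSet[ℱ t] D) (X : Ω → ℝ) :
    E t (fun ω => chi D ω * X ω) =ᵐ[μ] fun ω => chi D ω * E t X ω :=
  hE.posHom t X (chi D) (chi_meas hD) (.of_forall (chi_nonneg D))

/-- optional sampling / tower property at a bounded stopping time. -/
lemma ConsistentCNE.towerStop (hℱmono : Monotone ℱ) (hE : ConsistentCNE μ ℱ E)
    (s : ℕ) (τ : Ω → ℕ) (B : ℕ) (hB : ∀ ω, τ ω ≤ B)
    (hm : ∀ n, MeasurableSet[ℱ (s + n)] {ω | τ ω = n}) (X : Ω → ℝ) :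
    E s X =ᵐ[μ] E s (fun ω => E (s + τ ω) X ω) := by
  set Z : ℕ → Ω → ℝ := fun n ω => E (s + max (τ ω) n) X ω with hZ
  have main : ∀ d n, n + d = B → ∀ᵐ ω ∂μ, n ≤ τ ω → E (s + n) X ω = E (s + n) (Z n) ω := by
    intro d
    induction d with
    | zero =>
      intro n hn
      have hτn : ∀ ω, τ ω ≤ n := fun ω => by have := hB ω; omega
      have hZB : Z n = fun ω => E (s + n) X ω := by
        funext ω; simp only [hZ]; rw [max_eq_right (hτn ω)]
      rw [hZB]
      filter_upwards [hE.tower (s + n) (s + n) X le_rfl] with ω hω _ using hω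
    | succ d ih =>
      intro n hn
      have hd : n + 1 + d = B := by omega
      have ihn := ih (n + 1) hd
      -- indicator sets
      set I : Set Ω := {ω | τ ω = n} with hIdef
      set J : Set Ω := {ω | n + 1 ≤ τ ω} with hJdef
      have hI : MeasurableSet[ℱ (s + n)] I := hm n
      have hJ : MeasurableSet[ℱ (s + n)] J := by
        have hJeq : J = (⋃ k ∈ Finset.range (n + 1), {ω | τ ω = k})ᶜ := by
          ext ω
          simp only [hJdef, Set.mem_setOf_eq, Set.mem_compl_iff, Set.mem_iUnion,
            Finset.mem_range, not_exists]
          constructor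
          · intro hω k hk hτk
            omega
          · intro hω
            by_contra hcon
            exact hω (τ ω) (by omega) rfl
        rw [hJeq]
        refine MeasurableSet.compl ?_
        refine MeasurableSet.biUnion (Finset.range (n + 1)).countable_toSet ?_
        intro k hk
        have hk2 : k ∈ Finset.range (n + 1) := hk
        have hk3 : k < n + 1 := Finset.mem_range.mp hk2
        have hkn : s + k ≤ s + n := by omega
        exact hℱmono hkn _ (hm k)
      -- Claim a : on {τ = n}
      have ca : (fun ω => chi I ω * E (s + n) (Z n) ω)
          =ᵐ[μ] fun ω => chi I ω * E (s + n) X ω := by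
        have e2 : (fun ω => chi I ω * Z n ω) = fun ω => chi I ω * E (s + n) X ω := by
          funext ω
          by_cases hω : ω ∈ I
          · have : τ ω = n := hω
            simp only [hZ, chi_mem hω, one_mul, this, max_self]
          · simp [chi_not_mem hω]
        have c1 := (hE.localize hI (Z n)).symm
        have c3 := hE.localize hI (E (s + n) X)
        have c4 : (fun ω => chi I ω * E (s + n) (E (s + n) X) ω)
            =ᵐ[μ] fun ω => chi I ω * E (s + n) X ω := by
          filter_upwards [hE.tower (s + n) (s + n) X le_rfl] with ω hω
          rw [← hω]
        calc (fun ω => chi I ω * E (s + n) (Z n) ω)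
            =ᵐ[μ] E (s + n) (fun ω => chi I ω * Z n ω) := c1
          _ = E (s + n) (fun ω => chi I ω * E (s + n) X ω) := by rw [e2]
          _ =ᵐ[μ] fun ω => chi I ω * E (s + n) (E (s + n) X) ω := c3
          _ =ᵐ[μ] fun ω => chi I ω * E (s + n) X ω := c4
      -- Claim b : on {n+1 ≤ τ}
      have cb : (fun ω => chi J ω * E (s + n) X ω)
          =ᵐ[μ] fun ω => chi J ω * E (s + n) (Z n) ω := by
        have d1 : (fun ω => chi J ω * E (s + n) X ω)
            =ᵐ[μ] fun ω => chi J ω * E (s + n) (E (s + (n + 1)) X) ω := by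
          filter_upwards [hE.tower (s + n) (s + (n + 1)) X (by omega)] with ω hω
          rw [← hω]
        have d2 := (hE.localize hJ (E (s + (n + 1)) X)).symm
        have d3 : (fun ω => chi J ω * E (s + (n + 1)) X ω)
            =ᵐ[μ] fun ω => chi J ω * E (s + (n + 1)) (Z (n + 1)) ω := by
          filter_upwards [ihn] with ω hω
          by_cases hJω : ω ∈ J
          · rw [hω hJω]
          · simp [chi_not_mem hJω]
        have d4 := hE.congr (t := s + n) d3
        have d5 := hE.localize hJ (E (s + (n + 1)) (Z (n + 1)))
        have d6 : (fun ω => chi J ω * E (s + n) (E (s + (n + 1)) (Z (n + 1))) ω)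
            =ᵐ[μ] fun ω => chi J ω * E (s + n) (Z (n + 1)) ω := by
          filter_upwards [hE.tower (s + n) (s + (n + 1)) (Z (n + 1)) (by omega)] with ω hω
          rw [← hω]
        have e7 : (fun ω => chi J ω * Z (n + 1) ω) = fun ω => chi J ω * Z n ω := by
          funext ω
          by_cases hJω : ω ∈ J
          · have hτω : n + 1 ≤ τ ω := hJω
            simp only [hZ]
            rw [max_eq_left (by omega), max_eq_left (by omega)]
          · simp [chi_not_mem hJω]
        have d7 : (fun ω => chi J ω * E (s + n) (Z (n + 1)) ω)
            =ᵐ[μ] fun ω => chi J ω * E (s + n) (Z n) ω := by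
          calc (fun ω => chi J ω * E (s + n) (Z (n + 1)) ω)
              =ᵐ[μ] E (s + n) (fun ω => chi J ω * Z (n + 1) ω) := (hE.localize hJ (Z (n + 1))).symm
            _ = E (s + n) (fun ω => chi J ω * Z n ω) := by rw [e7]
            _ =ᵐ[μ] fun ω => chi J ω * E (s + n) (Z n) ω := hE.localize hJ (Z n)
        exact d1.trans (d2.trans (d4.trans (d5.trans (d6.trans d7))))
      filter_upwards [ca, cb] with ω hca hcb hτω
      rcases eq_or_lt_of_le hτω with hτn | hτn
      · have hωI : ω ∈ I := hτn.symm
        have := hca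
        rw [chi_mem hωI, one_mul, one_mul] at this
        exact this.symm
      · have hωJ : ω ∈ J := hτn
        have := hcb
        rw [chi_mem hωJ, one_mul, one_mul] at this
        exact this
  have := main B 0 (by omega)
  have h0 : ∀ᵐ ω ∂μ, E (s + 0) X ω = E (s + 0) (Z 0) ω := by
    filter_upwards [this] with ω hω using hω (Nat.zero_le _)
  have hZ0 : Z 0 = fun ω => E (s + τ ω) X ω := by
    funext ω; simp only [hZ]; rw [max_eq_left (Nat.zero_le _)]
  have h0' : E s X =ᵐ[μ] E s (Z 0) := by
    simp only [Nat.add_zero] at h0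
    exact h0
  rw [hZ0] at h0'
  exact h0'

/-- Localized translation at a bounded stopping time. -/
lemma ConsistentCNE.locTransl (hE : ConsistentCNE μ ℱ E)
    (s : ℕ) (τ : Ω → ℕ)
    (hm : ∀ n, MeasurableSet[ℱ (s + n)] {ω | τ ω = n})
    (D : Set Ω) (hD : ∀ n, MeasurableSet[ℱ (s + n)] (D ∩ {ω | τ ω = n}))
    (c : ℕ → Ω → ℝ) (hc : ∀ n, Measurable[ℱ (s + n)] (c n)) (X : Ω → ℝ) :
    ∀ᵐ ω ∂μ, E (s + τ ω) (fun ω' => c (τ ω') ω' + chi D ω' * X ω') ω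
      = c (τ ω) ω + chi D ω * E (s + τ ω) X ω := by
  set F : Ω → ℝ := fun ω' => c (τ ω') ω' + chi D ω' * X ω' with hF
  have key : ∀ n, ∀ᵐ ω ∂μ, τ ω = n →
      E (s + n) F ω = c n ω + chi D ω * E (s + n) X ω := by
    intro n
    set I : Set Ω := {ω | τ ω = n} with hIdef
    have hI := hm n
    have hID : MeasurableSet[ℱ (s + n)] (D ∩ I) := hD n
    have e2 : (fun ω => chi I ω * F ω)
        = fun ω => chi (D ∩ I) ω * X ω + chi I ω * c n ω := by
      funext ω
      simp only [hF]
      by_cases hω : ω ∈ I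
      · have hτω : τ ω = n := hω
        by_cases hωD : ω ∈ D
        · rw [chi_mem hω, chi_mem hωD, chi_mem (Set.mem_inter hωD hω), hτω]
          ring
        · rw [chi_mem hω, chi_not_mem hωD, chi_not_mem (fun hc' => hωD (Set.mem_of_mem_inter_left hc')), hτω]
          ring
      · rw [chi_not_mem hω, chi_not_mem (fun hc' => hω (Set.mem_of_mem_inter_right hc'))]
        ring
    have e3 := hE.transl (s + n) (fun ω => chi (D ∩ I) ω * X ω) (fun ω => chi I ω * c n ω)
      ((chi_meas hI).mul (hc n))
    have e4 := hE.localize hID X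
    have e1 := (hE.localize hI F).symm
    have comb : (fun ω => chi I ω * E (s + n) F ω)
        =ᵐ[μ] fun ω => chi (D ∩ I) ω * E (s + n) X ω + chi I ω * c n ω := by
      calc (fun ω => chi I ω * E (s + n) F ω)
          =ᵐ[μ] E (s + n) (fun ω => chi I ω * F ω) := e1
        _ = E (s + n) (fun ω => chi (D ∩ I) ω * X ω + chi I ω * c n ω) := by rw [e2]
        _ =ᵐ[μ] fun ω => E (s + n) (fun ω' => chi (D ∩ I) ω' * X ω') ω + chi I ω * c n ω := e3
        _ =ᵐ[μ] fun ω => chi (D ∩ I) ω * E (s + n) X ω + chi I ω * c n ω := by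
            filter_upwards [e4] with ω hω
            rw [hω]
    filter_upwards [comb] with ω hω hτω
    have hωI : ω ∈ I := hτω
    rw [chi_mem hωI, one_mul, one_mul] at hω
    have hch : chi (D ∩ I) ω = chi D ω := by
      by_cases hωD : ω ∈ D
      · rw [chi_mem hωD, chi_mem (Set.mem_inter hωD hωI)]
      · rw [chi_not_mem hωD, chi_not_mem (fun hc' => hωD (Set.mem_of_mem_inter_left hc'))]
    rw [hch] at hω
    rw [hω]
    ring
  have all : ∀ᵐ ω ∂μ, ∀ n, τ ω = n →
      E (s + n) F ω = c n ω + chi D ω * E (s + n) X ω := ae_all_iff.mpr key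
  filter_upwards [all] with ω hω
  exact hω (τ ω) rfl

/-- `𝒯(s)`: the bounded positive `(ℱ (s+t))`-stopping times. -/
def stopTimes (ℱ : ℕ → MeasurableSpace Ω) (s : ℕ) : Set (Ω → ℕ) :=
  {τ | (∀ ω, 1 ≤ τ ω) ∧ (∃ B, ∀ ω, τ ω ≤ B) ∧
    ∀ n, MeasurableSet[ℱ (s + n)] {ω | τ ω = n}}

/-- The optimal-stopping value
`V(τ, λ) = 𝓔(∑_{t=1}^{τ} β^t (h(s+t) - λ) | ℱ_s)`. -/
noncomputable def banditV (E : ℕ → (Ω → ℝ) → (Ω → ℝ)) (h : ℕ → Ω → ℝ) (β : ℝ)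
    (s : ℕ) (τ : Ω → ℕ) (lam : Ω → ℝ) : Ω → ℝ :=
  E s (fun ω => ∑ t ∈ Finset.Icc 1 (τ ω), β ^ t * (h (s + t) ω - lam ω))

/-- The hitting time `σ(s, λ) = inf {θ ≥ 1 : γ(s + θ) > λ}` of the Gittins
index process above a level `λ < C` (Definition 4.1). -/
noncomputable def hitTime (γ : ℕ → Ω → ℝ) (s : ℕ) (lam : Ω → ℝ) : Ω → ℕ :=
  fun ω => sInf {θ : ℕ | 1 ≤ θ ∧ lam ω < γ (s + θ) ω}


theorem stmt10 (μ : Measure Ω) [IsProbabilityMeasure μ]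
    (ℱ : ℕ → MeasurableSpace Ω) (hℱmono : Monotone ℱ)
    (hℱle : ∀ t, ℱ t ≤ ‹MeasurableSpace Ω›)
    (E : ℕ → (Ω → ℝ) → (Ω → ℝ)) (hE : ConsistentCNE μ ℱ E)
    (T : ℕ) (C : ℝ) (hC : 0 < C) (β : ℝ) (hβ : β ∈ Set.Ioo (0 : ℝ) 1)
    (h : ℕ → Ω → ℝ) (hhAdapted : ∀ t, Measurable[ℱ t] (h t))
    (hhBdd : ∀ t, t ≤ T → ∀ ω, 0 ≤ h t ω ∧ h t ω < C)
    (hhC : ∀ t, T < t → ∀ ω, h t ω = C)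
    -- the robust Gittins index process
    (γ : ℕ → Ω → ℝ) (hγAdapted : ∀ t, Measurable[ℱ t] (γ t))
    (hγBdd : ∀ t, t < T → ∀ ω, 0 ≤ γ t ω ∧ γ t ω < C)
    (hγC : ∀ t, T ≤ t → ∀ ω, γ t ω = C)
    (s : ℕ) (lam : Ω → ℝ) (hlamMeas : Measurable[ℱ s] lam)
    (hlam : ∀ ω, 0 ≤ lam ω ∧ lam ω < C)
    -- `σ(s,λ)` is a bounded positive stopping time minimizing `V(·,λ)`
    (hσStop : hitTime γ s lam ∈ stopTimes ℱ s)
    (hσOpt : ∀ τ' ∈ stopTimes ℱ s,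
      banditV E h β s (hitTime γ s lam) lam ≤ᵐ[μ] banditV E h β s τ' lam)
    (τ : Ω → ℕ) (hτ : τ ∈ stopTimes ℱ s)
    (hτσ : ∀ ω, τ ω ≤ hitTime γ s lam ω) :
    (fun ω => E (s + τ ω)
      (fun ω' => ∑ t ∈ Finset.Icc (τ ω' + 1) (hitTime γ s lam ω'),
        β ^ t * (h (s + t) ω' - lam ω')) ω) ≤ᵐ[μ] 0 := by

  classical
  obtain ⟨hτ1, ⟨Bτ, hBτ⟩, hτm⟩ := hτ
  obtain ⟨hσ1, ⟨Bσ, hBσ⟩, hσm⟩ := hσStop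
  set σ : Ω → ℕ := hitTime γ s lam with hσdef
  set Y : Ω → ℝ :=
    fun ω => ∑ t ∈ Finset.Icc (τ ω + 1) (σ ω), β ^ t * (h (s + t) ω - lam ω) with hYdef
  set g : Ω → ℝ := fun ω => E (s + τ ω) Y ω with hgdef
  show g ≤ᵐ[μ] 0
  set S : ℕ → Ω → ℝ :=
    fun n ω => ∑ t ∈ Finset.Icc 1 n, β ^ t * (h (s + t) ω - lam ω) with hSdef
  -- measurability of the partial sums
  have hSmeas : ∀ n, Measurable[ℱ (s + n)] (S n) := by
    intro n
    apply Finset.measurable_sum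
    intro t ht
    have hlam' : Measurable[ℱ (s + n)] lam :=
      hlamMeas.mono (hℱmono (Nat.le_add_right s n)) le_rfl
    have ht' : t ≤ n := (Finset.mem_Icc.mp ht).2
    have hh' : Measurable[ℱ (s + n)] (h (s + t)) :=
      (hhAdapted (s + t)).mono (hℱmono (by omega)) le_rfl
    exact measurable_const.mul (hh'.sub hlam')
  -- sum splitting
  have hIcc1 : ∀ n : ℕ, Finset.Icc 1 n = Finset.Ioc 0 n := by
    intro n; ext t; simp only [Finset.mem_Icc, Finset.mem_Ioc]; omega
  have hIcc2 : ∀ a b : ℕ, Finset.Icc (a + 1) b = Finset.Ioc a b := by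
    intro a b; ext t; simp only [Finset.mem_Icc, Finset.mem_Ioc]; omega
  have hsplit : ∀ ω, S (σ ω) ω = S (τ ω) ω + Y ω := by
    intro ω
    simp only [hSdef, hYdef, hIcc1, hIcc2]
    exact (Finset.sum_Ioc_consecutive _ (Nat.zero_le _) (hτσ ω)).symm
  -- the modified stopping time
  set τ' : Ω → ℕ := fun ω => if 0 < g ω then τ ω else σ ω with hτ'def
  have hgn : ∀ ω n, τ ω = n → g ω = E (s + n) Y ω := by
    intro ω n hn; simp only [hgdef, hn]
  have hgsetm : ∀ n, MeasurableSet[ℱ (s + n)] {ω | 0 < E (s + n) Y ω} :=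
    fun n => measurableSet_lt measurable_const (hE.adapted (s + n) Y)
  have hτ'mem : τ' ∈ stopTimes ℱ s := by
    refine ⟨fun ω => ?_, ⟨max Bτ Bσ, fun ω => ?_⟩, fun n => ?_⟩
    · simp only [hτ'def]; split_ifs; exacts [hτ1 ω, hσ1 ω]
    · simp only [hτ'def]; split_ifs
      · exact le_trans (hBτ ω) (le_max_left _ _)
      · exact le_trans (hBσ ω) (le_max_right _ _)
    · have hset : {ω | τ' ω = n} =
          ({ω | τ ω = n} ∩ {ω | 0 < E (s + n) Y ω}) ∪
          (⋃ k ∈ Finset.range (n + 1),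
            ({ω | σ ω = n} ∩ ({ω | τ ω = k} ∩ {ω | 0 < E (s + k) Y ω}ᶜ))) := by
        ext ω
        simp only [Set.mem_setOf_eq, Set.mem_union, Set.mem_inter_iff, Set.mem_iUnion,
          Finset.mem_range, Set.mem_compl_iff, hτ'def]
        constructor
        · intro hω
          by_cases hg0 : 0 < g ω
          · rw [if_pos hg0] at hω
            left
            exact ⟨hω, by rw [← hgn ω n hω]; exact hg0⟩
          · rw [if_neg hg0] at hω
            right
            refine ⟨τ ω, ?_, hω, rfl, ?_⟩
            · have := hτσ ω; omega
            · intro hcon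
              exact hg0 (by rw [hgn ω (τ ω) rfl]; exact hcon)
        · intro hω
          rcases hω with ⟨hτn, hgpos⟩ | ⟨k, hk, hσn, hτk, hgneg⟩
          · have hg0 : 0 < g ω := by rw [hgn ω n hτn]; exact hgpos
            rw [if_pos hg0]; exact hτn
          · have hg0 : ¬ 0 < g ω := fun hcon => hgneg (by rw [← hgn ω k hτk]; exact hcon)
            rw [if_neg hg0]; exact hσn
      rw [hset]
      refine MeasurableSet.union ((hτm n).inter (hgsetm n)) ?_
      refine MeasurableSet.biUnion (Finset.range (n + 1)).countable_toSet ?_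
      intro k hk
      have hk2 : k ∈ Finset.range (n + 1) := hk
      have hk3 : k < n + 1 := Finset.mem_range.mp hk2
      refine (hσm n).inter ?_
      have hkn : ℱ (s + k) ≤ ℱ (s + n) := hℱmono (by omega)
      exact hkn _ ((hτm k).inter (hgsetm k).compl)
  -- the complement set where continuation is not profitable
  set Dc : Set Ω := {ω | ¬ 0 < g ω} with hDcdef
  have hmemDc : ∀ ω, ¬ 0 < g ω → ω ∈ Dc := by
    intro ω hω; simp only [hDcdef, Set.mem_setOf_eq]; exact hω
  have hnotDc : ∀ ω, 0 < g ω → ω ∉ Dc := by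
    intro ω hω hm; simp only [hDcdef, Set.mem_setOf_eq] at hm; exact hm hω
  have hDcm : ∀ n, MeasurableSet[ℱ (s + n)] (Dc ∩ {ω | τ ω = n}) := by
    intro n
    have : Dc ∩ {ω | τ ω = n} = ({ω | τ ω = n} ∩ {ω | 0 < E (s + n) Y ω}ᶜ) := by
      ext ω
      simp only [Set.mem_inter_iff, Set.mem_setOf_eq, Set.mem_compl_iff, hDcdef]
      constructor
      · rintro ⟨hg0, hτn⟩
        exact ⟨hτn, fun hcon => hg0 (by rw [hgn ω n hτn]; exact hcon)⟩
      · rintro ⟨hτn, hcon⟩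
        exact ⟨fun hg0 => hcon (by rw [← hgn ω n hτn]; exact hg0), hτn⟩
    rw [this]
    exact (hτm n).inter (hgsetm n).compl
  have hUnivm : ∀ n, MeasurableSet[ℱ (s + n)] ((Set.univ : Set Ω) ∩ {ω | τ ω = n}) := by
    intro n; rw [Set.univ_inter]; exact hτm n
  -- the stopped sums
  set Sσf : Ω → ℝ := fun ω => S (σ ω) ω with hSσf
  set Sτ'f : Ω → ℝ := fun ω => S (τ' ω) ω with hSτ'f
  have hFσ : (fun ω' => S (τ ω') ω' + chi (Set.univ : Set Ω) ω' * Y ω') = Sσf := by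
    funext ω
    rw [chi_mem (Set.mem_univ ω), one_mul, hSσf]
    exact (hsplit ω).symm
  have hFτ' : (fun ω' => S (τ ω') ω' + chi Dc ω' * Y ω') = Sτ'f := by
    funext ω
    by_cases hg0 : 0 < g ω
    · have hωD : ω ∉ Dc := hnotDc ω hg0
      rw [chi_not_mem hωD, zero_mul, add_zero, hSτ'f]
      simp only [hτ'def, if_pos hg0]
    · have hωD : ω ∈ Dc := hmemDc ω hg0
      rw [chi_mem hωD, one_mul, hSτ'f]
      simp only [hτ'def, if_neg hg0]
      exact (hsplit ω).symm
  -- localization of the conditional expectations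
  have hW := hE.locTransl s τ hτm (Set.univ : Set Ω) hUnivm S hSmeas Y
  have hU := hE.locTransl s τ hτm Dc hDcm S hSmeas Y
  rw [hFσ] at hW
  rw [hFτ'] at hU
  -- tower at stopping time τ
  set Wfun : Ω → ℝ := fun ω => E (s + τ ω) Sσf ω with hWfun
  set Ufun : Ω → ℝ := fun ω => E (s + τ ω) Sτ'f ω with hUfun
  have t1 : E s Sσf =ᵐ[μ] E s Wfun :=
    hE.towerStop hℱmono s τ Bτ hBτ hτm Sσf
  have t2 : E s Sτ'f =ᵐ[μ] E s Ufun :=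
    hE.towerStop hℱmono s τ Bτ hBτ hτm Sτ'f
  -- optimality
  have hopt : E s Sσf ≤ᵐ[μ] E s Sτ'f := hσOpt τ' hτ'mem
  -- comparison
  have hle : Ufun ≤ᵐ[μ] Wfun := by
    filter_upwards [hW, hU] with ω hw hu
    simp only [hUfun, hWfun]
    rw [hw, hu, chi_mem (Set.mem_univ ω), one_mul]
    have hg' : E (s + τ ω) Y ω = g ω := rfl
    rw [hg']
    by_cases hg0 : 0 < g ω
    · rw [chi_not_mem (hnotDc ω hg0), zero_mul]
      have : (0 : ℝ) ≤ g ω := le_of_lt hg0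
      linarith
    · rw [chi_mem (hmemDc ω hg0), one_mul]
  have hEsle : E s Ufun ≤ᵐ[μ] E s Wfun := hE.mono s Wfun Ufun hle
  have hother : E s Wfun ≤ᵐ[μ] E s Ufun :=
    t1.symm.le.trans (hopt.trans t2.le)
  have heq : E s Wfun =ᵐ[μ] E s Ufun := hother.antisymm hEsle
  have hWU : Wfun =ᵐ[μ] Ufun := hE.strictMono s Wfun Ufun hle heq
  -- conclude
  filter_upwards [hWU, hW, hU] with ω hwu hw hu
  simp only [hWfun, hUfun] at hwu
  rw [hw, hu, chi_mem (Set.mem_univ ω), one_mul] at hwu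
  have hg' : E (s + τ ω) Y ω = g ω := rfl
  rw [hg'] at hwu
  have hkey : g ω = chi Dc ω * g ω := by linarith
  show g ω ≤ 0
  by_contra hcon
  push_neg at hcon
  have hg0 : 0 < g ω := hcon
  rw [chi_not_mem (hnotDc ω hg0), zero_mul] at hkey
  exact absurd hkey (ne_of_gt hg0)
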